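/- Necessary rater proportion: with expected satisfaction μ(k) = trk(1−e^{−λ})/(1 − t(1−k)(1−e^{−λ})), threshold b ∈ (0,1), and target satisfied proportion T̃, the condition P(s_i ≤ b) ≤ 1 − T̃ together with the reverse Markov bound P(s_i ≤ b) ≥ (b − μ(k))/b implies k ≥ b T̃ (1 − t(1−e^{−λ})) / (t(1−e^{−λ})(r − b T̃)), provided r > b T̃. -/

import Mathlib

open Real

/-- Necessary rater proportion k^min(T̃). -/
theorem stmt_11 (t r k lam b T P μ : ℝ)
    (ht : t ∈ Set.Ioc (0:ℝ) 1) (hr : r ∈ Set.Ioc (0:ℝ) 1)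
    (hk : k ∈ Set.Icc (0:ℝ) 1) (hlam : 0 < lam)
    (hb : b ∈ Set.Ioo (0:ℝ) 1) (hT : T ∈ Set.Icc (0:ℝ) 1)
    (hcontr : t * (1 - k) * (1 - exp (-lam)) < 1)
    (hrb : b < r) (hrbT : b * T < r)
    (hμ : μ = t * r * k * (1 - exp (-lam)) / (1 - t * (1 - k) * (1 - exp (-lam))))
    (hP1 : P ≤ 1 - T) (hP2 : (b - μ) / b ≤ P) :
    b * T * (1 - t * (1 - exp (-lam))) / (t * (1 - exp (-lam)) * (r - b * T)) ≤ k := by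
  obtain ⟨ht0, ht1⟩ := ht
  obtain ⟨hr0, hr1⟩ := hr
  obtain ⟨hk0, hk1⟩ := hk
  obtain ⟨hb0, hb1⟩ := hb
  obtain ⟨hT0, hT1⟩ := hT
  have he : exp (-lam) < 1 := exp_lt_one_iff.mpr (by linarith)
  have hq0 : 0 < t * (1 - exp (-lam)) := mul_pos ht0 (by linarith)
  have hD : 0 < 1 - t * (1 - k) * (1 - exp (-lam)) := by linarith
  have hμT : b * T ≤ μ := by
    have h1 : (b - μ) / b ≤ 1 - T := le_trans hP2 hP1
    have h2 : b - μ ≤ (1 - T) * b := (div_le_iff₀ hb0).mp h1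
    nlinarith
  have hμ' : μ * (1 - t * (1 - k) * (1 - exp (-lam))) = t * r * k * (1 - exp (-lam)) := by
    rw [hμ]; exact div_mul_cancel₀ _ hD.ne'
  have hkey : b * T * (1 - t * (1 - exp (-lam))) ≤ k * (t * (1 - exp (-lam)) * (r - b * T)) := by
    nlinarith [mul_le_mul_of_nonneg_right hμT hD.le]
  have hden : 0 < t * (1 - exp (-lam)) * (r - b * T) := mul_pos hq0 (by linarith)
  exact (div_le_iff₀ hden).mpr hkey
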